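/- arXiv:1504.03007 — 3 statements merged into one kernel-verified Lean document; each statement's English description precedes it below -/
import Mathlib

section
/- If f is a rational function on ℂ that has no poles outside the unit circle S¹, agrees with a function bounded on a dense subset of S¹ (hence is bounded on S¹ minus its poles), and has a finite limit as z → ∞, then f is constant. -/
open Polynomial Filter Complex

/-- A rational function on `ℂ` whose poles all lie on the unit
circle, which is bounded on the part of the unit circle where it is defined,
and which has a finite limit at infinity, is constant (on its domain of
definition). -/
theorem rational_function_constant (p q : Polynomial ℂ) (hq : q ≠ 0)
    (hpoles : ∀ z : ℂ, q.eval z = 0 → ‖z‖ = 1)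
    (C : ℝ)
    (hbd : ∀ z : ℂ, ‖z‖ = 1 → q.eval z ≠ 0 →
      ‖p.eval z / q.eval z‖ ≤ C)
    (L : ℂ)
    (hlim : Filter.Tendsto (fun z : ℂ => p.eval z / q.eval z)
      (Bornology.cobounded ℂ) (nhds L)) :
    ∀ z w : ℂ, q.eval z ≠ 0 → q.eval w ≠ 0 →
      p.eval z / q.eval z = p.eval w / q.eval w := by
  set d := GCDMonoid.gcd p q with hd
  have hd0 : d ≠ 0 := gcd_ne_zero_of_right hq
  set p₁ := p / d with hp₁def
  set q₁ := q / d with hq₁def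
  have hpd : d * p₁ = p := EuclideanDomain.mul_div_cancel' hd0 (gcd_dvd_left p q)
  have hqd : d * q₁ = q := EuclideanDomain.mul_div_cancel' hd0 (gcd_dvd_right p q)
  have hcop : IsCoprime p₁ q₁ := isCoprime_div_gcd_div_gcd hq
  have hq₁0 : q₁ ≠ 0 := right_div_gcd_ne_zero hq
  have key : ∀ x : ℂ, q.eval x ≠ 0 → p.eval x / q.eval x = p₁.eval x / q₁.eval x := by
    intro x hx
    have hdx : d.eval x ≠ 0 := fun h => hx (by rw [← hqd, eval_mul, h, zero_mul])
    rw [← hpd, ← hqd, eval_mul, eval_mul, mul_div_mul_left _ _ hdx]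
  have hq₁x : ∀ x : ℂ, q.eval x ≠ 0 → q₁.eval x ≠ 0 := by
    intro x hx h
    exact hx (by rw [← hqd, eval_mul, h, mul_zero])
  -- q₁ has no roots
  have hnoroot : ∀ x : ℂ, q₁.eval x ≠ 0 := by
    intro x₀ hx₀
    have hqx₀ : q.eval x₀ = 0 := by rw [← hqd, eval_mul, hx₀, mul_zero]
    have habs : ‖x₀‖ = 1 := hpoles x₀ hqx₀
    have hx₀0 : x₀ ≠ 0 := by
      intro h; rw [h] at habs; simp at habs
    have hp₁x₀ : p₁.eval x₀ ≠ 0 := by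
      obtain ⟨a, b, hab⟩ := hcop
      intro h
      have h2 := congrArg (Polynomial.eval x₀) hab
      simp [h, hx₀] at h2
    -- the "bad" parameter set
    set g : ℝ → ℂ := fun t => x₀ * Complex.exp (t * Complex.I) with hg
    have hginj : Set.InjOn g (Set.Ioo 0 1) := by
      intro t₁ ht₁ t₂ ht₂ hteq
      have he : Complex.exp (t₁ * Complex.I) = Complex.exp (t₂ * Complex.I) :=
        mul_left_cancel₀ hx₀0 hteq
      have hc : Real.cos t₁ = Real.cos t₂ := by
        have := congrArg Complex.re he
        rwa [Complex.exp_ofReal_mul_I_re, Complex.exp_ofReal_mul_I_re] at this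
      have h1pi : (1:ℝ) ≤ Real.pi := by linarith [Real.pi_gt_three]
      exact Real.injOn_cos ⟨ht₁.1.le, ht₁.2.le.trans h1pi⟩ ⟨ht₂.1.le, ht₂.2.le.trans h1pi⟩ hc
    set T : Set ℝ := {t ∈ Set.Ioo (0:ℝ) 1 | q.eval (g t) = 0} with hT
    have hTfin : T.Finite := by
      apply Set.Finite.of_finite_image (f := g)
      · exact (Polynomial.finite_setOf_isRoot hq).subset (by
          rintro x ⟨t, ht, rfl⟩; exact ht.2)
      · exact hginj.mono (fun t ht => ht.1)
    -- choose the sequence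
    have hchoice : ∀ n : ℕ, ∃ t : ℝ, t ∈ Set.Ioo (0:ℝ) (1/(n+1)) \ T := by
      intro n
      have hpos : (0:ℝ) < 1/(n+1) := by positivity
      have : (Set.Ioo (0:ℝ) (1/(n+1)) \ T).Infinite :=
        (Set.Ioo_infinite hpos).diff hTfin
      exact this.nonempty
    choose t ht using hchoice
    have ht01 : ∀ n, t n ∈ Set.Ioo (0:ℝ) 1 := by
      intro n
      refine ⟨(ht n).1.1, lt_of_lt_of_le (ht n).1.2 ?_⟩
      rw [div_le_one (by positivity)]
      linarith [Nat.cast_nonneg (α := ℝ) n]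
    have hqz : ∀ n, q.eval (g (t n)) ≠ 0 := by
      intro n h
      exact (ht n).2 ⟨ht01 n, h⟩
    have habs1 : ∀ n, ‖g (t n)‖ = 1 := by
      intro n
      rw [hg]; simp [map_mul, habs, Complex.norm_exp_ofReal_mul_I]
    have htend0 : Tendsto t atTop (nhds 0) := by
      have h1 : Tendsto (fun n : ℕ => 1/((n:ℝ)+1)) atTop (nhds 0) :=
        tendsto_one_div_add_atTop_nhds_zero_nat
      refine squeeze_zero (fun n => (ht n).1.1.le) (fun n => (ht n).1.2.le) h1
    have hgt : Tendsto (fun n => g (t n)) atTop (nhds x₀) := by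
      have hcont : Continuous g := by
        rw [hg]; continuity
      have := (hcont.tendsto 0).comp htend0
      simpa [hg, Function.comp_def] using this
    -- the bound along the sequence
    have hineq : ∀ n, ‖p₁.eval (g (t n))‖ ≤ C * ‖q₁.eval (g (t n))‖ := by
      intro n
      have h1 := hbd (g (t n)) (habs1 n) (hqz n)
      rw [key _ (hqz n), norm_div] at h1
      have h2 : ‖q₁.eval (g (t n))‖ ≠ 0 :=
        fun h => hq₁x _ (hqz n) (by simpa using h)
      rw [div_le_iff₀ (lt_of_le_of_ne (norm_nonneg _) (Ne.symm h2))] at h1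
      exact h1
    have hlhs : Tendsto (fun n => ‖p₁.eval (g (t n))‖) atTop
        (nhds ‖p₁.eval x₀‖) :=
      ((continuous_norm.comp p₁.continuous).tendsto x₀).comp hgt
    have hrhs : Tendsto (fun n => C * ‖q₁.eval (g (t n))‖) atTop
        (nhds (C * ‖q₁.eval x₀‖)) :=
      (((continuous_norm.comp q₁.continuous).tendsto x₀).comp hgt).const_mul C
    have hfin : ‖p₁.eval x₀‖ ≤ C * ‖q₁.eval x₀‖ :=
      le_of_tendsto_of_tendsto' hlhs hrhs hineq
    rw [hx₀] at hfin
    simp only [map_zero, norm_zero, mul_zero] at hfin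
    exact hp₁x₀ (by simpa using le_antisymm hfin (norm_nonneg _))
  -- q₁ is a nonzero constant
  have hq₁deg : q₁.degree ≤ 0 := by
    by_contra h
    push_neg at h
    obtain ⟨x, hx⟩ := Complex.exists_root h
    exact hnoroot x hx
  obtain ⟨c, hc⟩ : ∃ c : ℂ, q₁ = Polynomial.C c := ⟨q₁.coeff 0, eq_C_of_degree_le_zero hq₁deg⟩
  have hc0 : c ≠ 0 := by
    intro h; rw [h, map_zero] at hc; exact hq₁0 hc
  -- p₁ is a constant
  have hcobq : ∀ᶠ x : ℂ in Bornology.cobounded ℂ, q.eval x ≠ 0 := by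
    filter_upwards [tendsto_norm_cobounded_atTop.eventually (eventually_gt_atTop 1)] with x hx h
    have := hpoles x h
    rw [this] at hx
    exact lt_irrefl _ hx
  have hlim2 : Tendsto (fun x : ℂ => p₁.eval x) (Bornology.cobounded ℂ) (nhds (L * c)) := by
    have hev : (fun x : ℂ => p.eval x / q.eval x * c) =ᶠ[Bornology.cobounded ℂ]
        (fun x : ℂ => p₁.eval x) := by
      filter_upwards [hcobq] with x hx
      rw [key x hx, hc, eval_C, div_mul_cancel₀ _ hc0]
    exact (hlim.mul_const c).congr' hev
  have hp₁deg : p₁.degree ≤ 0 := by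
    by_contra h
    push_neg at h
    have := Polynomial.tendsto_norm_atTop p₁ h (tendsto_norm_cobounded_atTop (E := ℂ))
    exact not_tendsto_nhds_of_tendsto_atTop this _ hlim2.norm
  obtain ⟨a, ha⟩ : ∃ a : ℂ, p₁ = Polynomial.C a := ⟨p₁.coeff 0, eq_C_of_degree_le_zero hp₁deg⟩
  intro z w hz hw
  rw [key z hz, key w hw, ha, hc]
  simp
end

section
/- The group Γ₀(2) = {(a b; c d) ∈ SL₂(ℤ) : c ≡ 0 mod 2} is generated by the matrices T = (1 1; 0 1) and S T² S T, where S = (0 −1; 1 0). -/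
open ModularGroup Matrix MatrixGroups

private def Uu : SL(2,ℤ) := S * T ^ 2 * S * T
private def Vv : SL(2,ℤ) := ⟨!![1,0;-2,1], by simp [Matrix.det_fin_two_of]⟩
private def negI : SL(2,ℤ) := ⟨!![-1,0;0,-1], by simp [Matrix.det_fin_two_of]⟩

private lemma coe_Uu : (Uu : Matrix (Fin 2) (Fin 2) ℤ) = !![-1,-1;2,1] := by
  simp only [Uu, Matrix.SpecialLinearGroup.coe_mul, Matrix.SpecialLinearGroup.coe_pow, coe_S, coe_T]
  ext i j
  fin_cases i <;> fin_cases j <;> simp [Matrix.mul_apply, Fin.sum_univ_two, pow_two]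

private lemma Uu_sq : Uu ^ 2 = negI := by
  apply Subtype.ext
  simp only [Matrix.SpecialLinearGroup.coe_pow, coe_Uu, negI]
  ext i j
  fin_cases i <;> fin_cases j <;> simp [Matrix.mul_apply, Fin.sum_univ_two, pow_two]

private lemma Vv_eq : Vv = negI * Uu * T⁻¹ := by
  apply Subtype.ext
  show (Vv : Matrix (Fin 2) (Fin 2) ℤ) = ((negI * Uu * T⁻¹ : SL(2,ℤ)) : Matrix (Fin 2) (Fin 2) ℤ)
  rw [Matrix.SpecialLinearGroup.coe_mul, Matrix.SpecialLinearGroup.coe_mul, coe_Uu, coe_T_inv]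
  simp only [negI, Vv]
  ext i j
  fin_cases i <;> fin_cases j <;> simp [Matrix.mul_apply, Fin.sum_univ_two]

private lemma coe_Vv : (Vv : Matrix (Fin 2) (Fin 2) ℤ) = !![1,0;-2,1] := rfl

private lemma coe_Vv_inv : ((Vv⁻¹ : SL(2,ℤ)) : Matrix (Fin 2) (Fin 2) ℤ) = !![1,0;2,1] := by
  rw [Matrix.SpecialLinearGroup.coe_inv]
  show Matrix.adjugate !![1,0;-2,1] = _
  rw [Matrix.adjugate_fin_two]
  norm_num

private lemma entries_mul (A B : SL(2,ℤ)) (p q r s : ℤ)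
    (h : (B : Matrix (Fin 2) (Fin 2) ℤ) = !![p,q;r,s]) :
    (B * A) 0 0 = p * A 0 0 + q * A 1 0 ∧ (B * A) 1 0 = r * A 0 0 + s * A 1 0 := by
  constructor <;>
  · show (B * A).1 _ _ = _
    rw [Matrix.SpecialLinearGroup.coe_mul, h]
    simp [Matrix.mul_apply, Fin.sum_univ_two]
    try ring

private lemma det_rel (A : SL(2,ℤ)) : A 0 0 * A 1 1 - A 0 1 * A 1 0 = 1 := by
  have := A.2
  rwa [Matrix.det_fin_two] at this

private lemma natAbs_lt {x y : ℤ} (h : x * x < y * y) : x.natAbs < y.natAbs := by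
  rwa [Int.natAbs_lt_iff_mul_self_lt]

private lemma key (n : ℕ) : ∀ (A : SL(2,ℤ)), (A 0 0).natAbs + (A 1 0).natAbs = n →
    2 ∣ A 1 0 → A ∈ Subgroup.closure ({T, S * T ^ 2 * S * T} : Set SL(2,ℤ)) := by
  induction n using Nat.strong_induction_on with
  | _ n ih =>
  intro A hn hdvd
  set H := Subgroup.closure ({T, S * T ^ 2 * S * T} : Set SL(2,ℤ)) with hH
  have hT : T ∈ H := Subgroup.subset_closure (by simp)
  have hU : Uu ∈ H := Subgroup.subset_closure (by simp [Uu])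
  have hneg : negI ∈ H := Uu_sq ▸ pow_mem hU 2
  have hV : Vv ∈ H := Vv_eq ▸ mul_mem (mul_mem hneg hU) (inv_mem hT)
  have hdet := det_rel A
  by_cases hc0 : A 1 0 = 0
  · -- c = 0 : A = ±T^b
    rw [hc0] at hdet
    have had : A 0 0 * A 1 1 = 1 := by linarith
    have hA : (A : Matrix (Fin 2) (Fin 2) ℤ) = !![A 0 0, A 0 1; A 1 0, A 1 1] :=
      Matrix.eta_fin_two _
    obtain ⟨b, hb⟩ : ∃ b, A 0 1 = b := ⟨_, rfl⟩
    rw [hb] at hA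
    rcases Int.eq_one_or_neg_one_of_mul_eq_one' had with ⟨h1, h4⟩ | ⟨h1, h4⟩
    · have : A = T ^ b := by
        apply Subtype.ext
        rw [coe_T_zpow, hA, h1, hc0, h4]
      rw [this]
      exact zpow_mem hT _
    · have : A = negI * T ^ (-b) := by
        apply Subtype.ext
        rw [Matrix.SpecialLinearGroup.coe_mul, coe_T_zpow, hA, h1, hc0, h4]
        show _ = (!![-1,0;0,-1] : Matrix (Fin 2) (Fin 2) ℤ) * _
        rw [Matrix.mul_fin_two]
        norm_num
      rw [this]
      exact mul_mem hneg (zpow_mem hT _)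
  · -- c ≠ 0
    have haodd : ¬ (2 ∣ A 0 0) := by
      intro h2a
      have : (2:ℤ) ∣ 1 := by
        rw [← hdet]
        exact dvd_sub (Dvd.dvd.mul_right h2a _) (Dvd.dvd.mul_left hdvd _)
      norm_num at this
    have ha0 : A 0 0 ≠ 0 := fun h => haodd (h ▸ ⟨0, by ring⟩)
    have hac : A 0 0 * A 1 0 ≠ 0 := mul_ne_zero ha0 hc0
    by_cases hlt : (A 0 0).natAbs < (A 1 0).natAbs
    · -- reduce c using Vv or Vv⁻¹
      have haa : A 0 0 * A 0 0 < A 1 0 * A 1 0 := by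
        rwa [← Int.natAbs_lt_iff_mul_self_lt]
      rcases hac.lt_or_gt with hsgn | hsgn
      · -- a*c < 0 : use Vv⁻¹, c' = c + 2a
        obtain ⟨h1, h2⟩ := entries_mul A Vv⁻¹ 1 0 2 1 coe_Vv_inv
        have hm : ((Vv⁻¹ * A) 0 0).natAbs + ((Vv⁻¹ * A) 1 0).natAbs < n := by
          rw [h1, h2, ← hn]
          have : (2 * A 0 0 + 1 * A 1 0).natAbs < (A 1 0).natAbs :=
            natAbs_lt (by nlinarith)
          omega
        have hmem : Vv⁻¹ * A ∈ H := ih _ hm _ rfl (by rw [h2]; omega)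
        exact (mul_mem_cancel_left (inv_mem hV)).mp hmem
      · -- a*c > 0 : use Vv, c' = c - 2a
        obtain ⟨h1, h2⟩ := entries_mul A Vv 1 0 (-2) 1 coe_Vv
        have hm : ((Vv * A) 0 0).natAbs + ((Vv * A) 1 0).natAbs < n := by
          rw [h1, h2, ← hn]
          have : (-2 * A 0 0 + 1 * A 1 0).natAbs < (A 1 0).natAbs :=
            natAbs_lt (by nlinarith)
          omega
        have hmem : Vv * A ∈ H := ih _ hm _ rfl (by rw [h2]; omega)
        exact (mul_mem_cancel_left hV).mp hmem
    · -- |c| ≤ |a|, c ≠ 0 : reduce a using T or T⁻¹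
      have haa : A 1 0 * A 1 0 ≤ A 0 0 * A 0 0 := by
        rw [← Int.natAbs_le_iff_mul_self_le]
        omega
      have hcc : 0 < A 1 0 * A 1 0 := mul_self_pos.mpr hc0
      rcases hac.lt_or_gt with hsgn | hsgn
      · -- a*c < 0 : use T, a' = a + c
        obtain ⟨h1, h2⟩ := entries_mul A T 1 1 0 1 coe_T
        have hm : ((T * A) 0 0).natAbs + ((T * A) 1 0).natAbs < n := by
          rw [h1, h2, ← hn]
          have : (1 * A 0 0 + 1 * A 1 0).natAbs < (A 0 0).natAbs :=
            natAbs_lt (by nlinarith)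
          omega
        have hmem : T * A ∈ H := ih _ hm _ rfl (by rw [h2]; omega)
        exact (mul_mem_cancel_left hT).mp hmem
      · -- a*c > 0 : use T⁻¹, a' = a - c
        obtain ⟨h1, h2⟩ := entries_mul A T⁻¹ 1 (-1) 0 1 coe_T_inv
        have hm : ((T⁻¹ * A) 0 0).natAbs + ((T⁻¹ * A) 1 0).natAbs < n := by
          rw [h1, h2, ← hn]
          have : (1 * A 0 0 + -1 * A 1 0).natAbs < (A 0 0).natAbs :=
            natAbs_lt (by nlinarith)
          omega
        have hmem : T⁻¹ * A ∈ H := ih _ hm _ rfl (by rw [h2]; omega)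
        exact (mul_mem_cancel_left (inv_mem hT)).mp hmem

/-- The congruence subgroup
`Γ₀(2) = {(a b; c d) ∈ SL₂(ℤ) : c ≡ 0 mod 2}` is generated by the matrices
`T = (1 1; 0 1)` and `S T² S T`, where `S = (0 -1; 1 0)`. -/
theorem Gamma0_two_generators :
    CongruenceSubgroup.Gamma0 2
      = Subgroup.closure {T, S * T ^ 2 * S * T} := by
  apply le_antisymm
  · intro A hA
    have h2 : 2 ∣ A 1 0 := by
      have := (CongruenceSubgroup.Gamma0_mem).mp hA
      have h := (ZMod.intCast_zmod_eq_zero_iff_dvd (A 1 0) 2).mp this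
      exact_mod_cast h
    exact key _ A rfl h2
  · rw [Subgroup.closure_le]
    rintro x (rfl | rfl)
    · rw [SetLike.mem_coe, CongruenceSubgroup.Gamma0_mem]
      simp [coe_T]
    · rw [SetLike.mem_coe, CongruenceSubgroup.Gamma0_mem]
      have h2 : (S * T ^ 2 * S * T) 1 0 = 2 := by
        show (Uu).1 1 0 = 2
        rw [coe_Uu]; norm_num
      rw [h2, ZMod.intCast_zmod_eq_zero_iff_dvd]
      norm_num
end

section
/- Let F : ℂ × ℍ → ℂ be a meromorphic Jacobi form of index m and weight l over (2ℤ)² ⋊ SL₂(ℤ) whose poles all lie on lines of the form t = k(cτ+d)/r with k, r, c, d integers, gcd(c,d) = 1. If for every 𝒢 ∈ SL₂(ℤ) the transformed function F(𝒢(t,τ)) is holomorphic in (t,τ) ∈ ℝ × ℍ, then F is holomorphic on all of ℂ × ℍ. -/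
open scoped Real

private lemma analyticAt_zpow_comp {f : ℂ × ℂ → ℂ} {p : ℂ × ℂ}
    (hf : AnalyticAt ℂ f p) (h0 : f p ≠ 0) (n : ℤ) :
    AnalyticAt ℂ (fun q => f q ^ n) p := by
  rcases n with n | n
  · simp only [Int.ofNat_eq_coe, zpow_natCast]
    exact hf.pow n
  · simp only [zpow_negSucc]
    exact (hf.pow (n + 1)).inv (pow_ne_zero _ h0)

private lemma transform_inverse (F : ℂ → ℂ → ℂ) (m pi : ℂ) (l : ℤ) (a b c d : ℂ)
    (hdet : a * d - b * c = 1) (z w : ℂ) (hq : c * w + d ≠ 0) :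
    (c * w + d) ^ (-l) *
        Complex.exp (-2 * pi * Complex.I * m * c * z ^ 2 / (c * w + d)) *
      (((-c) * ((a * w + b) / (c * w + d)) + a) ^ (-l) *
        Complex.exp (-2 * pi * Complex.I * m * (-c) * (z / (c * w + d)) ^ 2 /
          ((-c) * ((a * w + b) / (c * w + d)) + a)) *
        F ((z / (c * w + d)) / ((-c) * ((a * w + b) / (c * w + d)) + a))
          ((d * ((a * w + b) / (c * w + d)) + (-b)) / ((-c) * ((a * w + b) / (c * w + d)) + a)))
      = F z w := by
  have hinv : (-c) * ((a * w + b) / (c * w + d)) + a = (c * w + d)⁻¹ := by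
    apply eq_inv_of_mul_eq_one_left
    field_simp
    linear_combination hdet
  rw [hinv, div_inv_eq_mul, div_inv_eq_mul, div_inv_eq_mul, div_mul_cancel₀ _ hq]
  have harg2 : (d * ((a * w + b) / (c * w + d)) + -b) * (c * w + d) = w := by
    rw [add_mul, mul_assoc, div_mul_cancel₀ _ hq]
    linear_combination w * hdet
  rw [harg2]
  have hB : -2 * pi * Complex.I * m * (-c) * (z / (c * w + d)) ^ 2 * (c * w + d)
      = -(-2 * pi * Complex.I * m * c * z ^ 2 / (c * w + d)) := by
    field_simp
  rw [hB, inv_zpow, ← zpow_neg, neg_neg]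
  calc (c * w + d) ^ (-l) *
        Complex.exp (-2 * pi * Complex.I * m * c * z ^ 2 / (c * w + d)) *
      ((c * w + d) ^ l *
        Complex.exp (-(-2 * pi * Complex.I * m * c * z ^ 2 / (c * w + d))) * F z w)
      = ((c * w + d) ^ (-l) * (c * w + d) ^ l) *
        (Complex.exp (-2 * pi * Complex.I * m * c * z ^ 2 / (c * w + d)) *
         Complex.exp (-(-2 * pi * Complex.I * m * c * z ^ 2 / (c * w + d)))) * F z w := by
          ring
    _ = F z w := by
        rw [← zpow_add₀ hq, ← Complex.exp_add]
        simp

set_option maxHeartbeats 1000000 in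
/-- Let `F(t, τ)` be a meromorphic Jacobi form of index `m` and
weight `l`: `F` is analytic on `ℍ` in `τ` and entire in `t` away from a singular set
`S` all of whose points lie on lines `t = k(cτ+d)/r` with `k, r, c, d ∈ ℤ`, `r ≠ 0`,
`gcd(c, d) = 1`.  If for every `𝒢 = (a b; c d) ∈ SL₂(ℤ)` the transformed function
`F(𝒢(t,τ)) = (cτ+d)^{-l} e^{-2πi m c t²/(cτ+d)} F(t/(cτ+d), (aτ+b)/(cτ+d))`
is holomorphic at every point of `ℝ × ℍ`, then `F` is holomorphic on all of
`ℂ × ℍ`. -/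
theorem jacobiForm_holomorphic_of_real_holomorphic
    (F : ℂ → ℂ → ℂ) (m : ℝ) (l : ℤ) (S : Set (ℂ × ℂ))
    (hS : ∀ p ∈ S, 0 < p.2.im ∧
      ∃ k r c d : ℤ, r ≠ 0 ∧ IsCoprime c d ∧
        p.1 = (k : ℂ) * ((c : ℂ) * p.2 + (d : ℂ)) / (r : ℂ))
    (hF : ∀ p : ℂ × ℂ, 0 < p.2.im → p ∉ S →
      AnalyticAt ℂ (fun q : ℂ × ℂ => F q.1 q.2) p)
    (hG : ∀ a b c d : ℤ, a * d - b * c = 1 →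
      ∀ (t : ℝ) (τ : ℂ), 0 < τ.im →
        AnalyticAt ℂ
          (fun q : ℂ × ℂ =>
            ((c : ℂ) * q.2 + (d : ℂ)) ^ (-l) *
              Complex.exp (-2 * (π : ℂ) * Complex.I * (m : ℂ) * (c : ℂ) * q.1 ^ 2 /
                ((c : ℂ) * q.2 + (d : ℂ))) *
              F (q.1 / ((c : ℂ) * q.2 + (d : ℂ)))
                (((a : ℂ) * q.2 + (b : ℂ)) / ((c : ℂ) * q.2 + (d : ℂ))))
          ((t : ℂ), τ)) :
    ∀ p : ℂ × ℂ, 0 < p.2.im → AnalyticAt ℂ (fun q : ℂ × ℂ => F q.1 q.2) p := by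
  intro p hp2
  by_cases hpS : p ∈ S
  · obtain ⟨-, k, r, c, d, hr, hcd, hp1⟩ := hS p hpS
    obtain ⟨u, v, huv⟩ := hcd
    set a : ℤ := v with ha
    set b : ℤ := -u with hb
    have hdet : a * d - b * c = 1 := by simp only [ha, hb]; linarith [huv]
    have hr' : (r : ℂ) ≠ 0 := Int.cast_ne_zero.mpr hr
    -- nonvanishing of c*w+d on the upper half plane
    have hd0 : (c : ℂ) * p.2 + (d : ℂ) ≠ 0 := by
      intro h
      have him := congrArg Complex.im h
      have hre := congrArg Complex.re h
      simp [Complex.add_im, Complex.mul_im, Complex.add_re, Complex.mul_re] at him hre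
      have hc0' : c = 0 := by
        rcases him with h' | h'
        · exact h'
        · exact absurd h' (ne_of_gt hp2)
      have hd0' : d = 0 := by
        have : (d : ℝ) = 0 := by
          rw [hc0'] at hre; push_cast at hre; linarith [hre]
        exact_mod_cast this
      rw [hc0', hd0'] at huv
      simp at huv
    -- the transformed base point
    set σ : ℂ := ((a : ℂ) * p.2 + (b : ℂ)) / ((c : ℂ) * p.2 + (d : ℂ)) with hσ
    have hdet' : (a : ℝ) * d - b * c = 1 := by exact_mod_cast hdet
    have hσim : 0 < σ.im := by
      have hN : 0 < Complex.normSq ((c : ℂ) * p.2 + (d : ℂ)) :=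
        Complex.normSq_pos.mpr hd0
      have : σ.im = p.2.im / Complex.normSq ((c : ℂ) * p.2 + (d : ℂ)) := by
        rw [hσ, Complex.div_im]
        simp only [Complex.add_im, Complex.add_re, Complex.mul_im, Complex.mul_re,
          Complex.intCast_re, Complex.intCast_im]
        field_simp
        ring_nf
        nlinarith [hdet', sq_nonneg ((c:ℝ) * p.2.re + d), sq_nonneg ((c:ℝ) * p.2.im)]
      rw [this]
      positivity
    -- apply hG to the inverse matrix
    have hGan := hG d (-b) (-c) a (by ring_nf; linarith [hdet]) ((k : ℝ) / (r : ℝ)) σ hσim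
    -- the change-of-variables map
    set φ : ℂ × ℂ → ℂ × ℂ := fun q =>
      (q.1 / ((c : ℂ) * q.2 + (d : ℂ)),
       ((a : ℂ) * q.2 + (b : ℂ)) / ((c : ℂ) * q.2 + (d : ℂ))) with hφ
    have hφp : φ p = (((((k : ℝ) / (r : ℝ)) : ℝ) : ℂ), σ) := by
      rw [hφ]
      simp only [Prod.mk.injEq]
      refine ⟨?_, rfl⟩
      rw [hp1]
      push_cast
      field_simp
    have hφan : AnalyticAt ℂ φ p := by
      apply AnalyticAt.prod
      · exact analyticAt_fst.div ((analyticAt_const.mul analyticAt_snd).add analyticAt_const) hd0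
      · exact ((analyticAt_const.mul analyticAt_snd).add analyticAt_const).div
          ((analyticAt_const.mul analyticAt_snd).add analyticAt_const) hd0
    set G : ℂ × ℂ → ℂ := fun q =>
      (((-c : ℤ) : ℂ) * q.2 + ((a : ℤ) : ℂ)) ^ (-l) *
        Complex.exp (-2 * (π : ℂ) * Complex.I * (m : ℂ) * ((-c : ℤ) : ℂ) * q.1 ^ 2 /
          (((-c : ℤ) : ℂ) * q.2 + ((a : ℤ) : ℂ))) *
        F (q.1 / (((-c : ℤ) : ℂ) * q.2 + ((a : ℤ) : ℂ)))
          ((((d : ℤ) : ℂ) * q.2 + ((-b : ℤ) : ℂ)) / (((-c : ℤ) : ℂ) * q.2 + ((a : ℤ) : ℂ)))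
      with hGdef
    have hGφ : AnalyticAt ℂ (fun q => G (φ q)) p := by
      have h1 : AnalyticAt ℂ G (φ p) := by rw [hφp]; exact hGan
      exact h1.comp hφan
    -- candidate analytic extension
    set H : ℂ × ℂ → ℂ := fun q =>
      ((c : ℂ) * q.2 + (d : ℂ)) ^ (-l) *
        Complex.exp (-2 * (π : ℂ) * Complex.I * (m : ℂ) * (c : ℂ) * q.1 ^ 2 /
          ((c : ℂ) * q.2 + (d : ℂ))) * G (φ q) with hH
    have hHan : AnalyticAt ℂ H p := by
      have hden_an : AnalyticAt ℂ (fun q : ℂ × ℂ => (c : ℂ) * q.2 + (d : ℂ)) p :=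
        (analyticAt_const.mul analyticAt_snd).add analyticAt_const
      refine AnalyticAt.mul (AnalyticAt.mul ?_ ?_) hGφ
      · exact analyticAt_zpow_comp hden_an hd0 (-l)
      · exact AnalyticAt.cexp ((analyticAt_const.mul (analyticAt_fst.pow 2)).div hden_an hd0)
    -- F agrees with H near p
    have heq : (fun q : ℂ × ℂ => F q.1 q.2) =ᶠ[nhds p] H := by
      have hopen : IsOpen {q : ℂ × ℂ | (c : ℂ) * q.2 + (d : ℂ) ≠ 0} := by
        have hcont : Continuous fun q : ℂ × ℂ => (c : ℂ) * q.2 + (d : ℂ) := by continuity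
        exact isOpen_ne_fun hcont continuous_const
      filter_upwards [hopen.mem_nhds hd0] with q hq
      simp only [hH, hGdef, hφ, Int.cast_neg]
      exact (transform_inverse F (m : ℂ) (π : ℂ) l (a : ℂ) (b : ℂ) (c : ℂ) (d : ℂ)
        (by exact_mod_cast hdet) q.1 q.2 hq).symm
    exact hHan.congr heq.symm
  · exact hF p hp2 hpS
end
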